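/- arXiv:2311.14168 — 3 statements merged into one kernel-verified Lean document; each statement's English description precedes it below -/
import Mathlib

section
/- Let k be a positive integer, M ∈ ℝ^{k×k} a symmetric positive definite matrix, b ∈ ℝ^k, and τ > 0. Define p*: ℝ^k → ℝ as the Gaussian density with mean −(1/2)M⁻¹b and covariance (τ/2)M⁻¹, i.e. p*(u) = ((2π)^k det((τ/2)M⁻¹))^{−1/2} · exp(−(1/τ)(u + (1/2)M⁻¹b)ᵀ M (u + (1/2)M⁻¹b)). Then for every measurable function p: ℝ^k → [0,∞) with ∫_{ℝ^k} p(u) du = 1 and such that u ↦ (uᵀMu + bᵀu + τ·log p(u))·p(u) is Lebesgue integrable (with the convention 0·log 0 = 0), one has ∫_{ℝ^k} (uᵀMu + bᵀu + τ log p(u)) p(u) du ≥ ∫_{ℝ^k} (uᵀMu + bᵀu + τ log p*(u)) p*(u) du. -/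
open Matrix MeasureTheory

/-- The Gaussian density on `ℝ^k` with mean `-(1/2) M⁻¹ b` and covariance `(τ/2) M⁻¹`. -/
noncomputable def pstar (k : ℕ) (M : Matrix (Fin k) (Fin k) ℝ) (b : Fin k → ℝ) (τ : ℝ)
    (u : Fin k → ℝ) : ℝ :=
  ((2 * Real.pi) ^ k * Matrix.det ((τ / 2) • M⁻¹)) ^ (-(1 / 2 : ℝ)) *
    Real.exp (-(1 / τ) *
      ((u + (1 / 2 : ℝ) • M⁻¹.mulVec b) ⬝ᵥ M.mulVec (u + (1 / 2 : ℝ) • M⁻¹.mulVec b)))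

section AuxProof
open Real


lemma euclid_int (k : ℕ) {c : ℝ} (hc : 0 < c) :
    Integrable (fun w : EuclideanSpace ℝ (Fin k) => Real.exp (-c * ‖w‖ ^ 2)) := by
  have h := (GaussianFourier.integrable_cexp_neg_mul_sq_norm_add (V := EuclideanSpace ℝ (Fin k))
    (b := (c : ℂ)) (by simpa using hc) 0 0).re
  refine h.congr (Filter.Eventually.of_forall fun w => ?_)
  simp [Complex.exp_ofReal_re, ← Complex.ofReal_pow, ← Complex.ofReal_mul, ← Complex.ofReal_neg]

open scoped MatrixOrder in
lemma pi_quad_gauss (k : ℕ) (M : Matrix (Fin k) (Fin k) ℝ) (hM : M.PosDef) {c : ℝ} (hc : 0 < c) :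
    Integrable (fun u : Fin k → ℝ => Real.exp (-c * (u ⬝ᵥ M.mulVec u))) ∧
    ∫ u : Fin k → ℝ, Real.exp (-c * (u ⬝ᵥ M.mulVec u))
      = (π / c) ^ ((k : ℝ) / 2) / Real.sqrt M.det := by
  classical
  set S := CFC.sqrt M with hSdef
  have hSS : S * S = M := CFC.sqrt_mul_sqrt_self M hM.posSemidef.nonneg
  have hST : Sᵀ = S := by
    have := (Matrix.nonneg_iff_posSemidef.mp (CFC.sqrt_nonneg M)).1
    simpa [Matrix.IsHermitian, Matrix.conjTranspose_eq_transpose_of_trivial] using this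
  have hdet2 : S.det * S.det = M.det := by rw [← Matrix.det_mul, hSS]
  have hdet_ne : S.det ≠ 0 := by
    intro h; have := hM.det_pos; rw [← hdet2, h, mul_zero] at this; exact lt_irrefl _ this
  have habs : |S.det| = Real.sqrt M.det := by
    rw [← hdet2, ← sq, Real.sqrt_sq_eq_abs]
  -- quadratic form via S
  have hq : ∀ u : Fin k → ℝ, u ⬝ᵥ M.mulVec u = (S.mulVec u) ⬝ᵥ (S.mulVec u) := by
    intro u
    rw [← hSS, ← Matrix.mulVec_mulVec, Matrix.dotProduct_mulVec, ← Matrix.mulVec_transpose, hST]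
  -- the model integrand on pi space
  set F : (Fin k → ℝ) → ℝ := fun v => Real.exp (-c * (v ⬝ᵥ v)) with hF
  have hFcont : Continuous F := by
    have h1 : Continuous fun v : Fin k → ℝ => v ⬝ᵥ v := by
      simp only [dotProduct]; fun_prop
    exact Real.continuous_exp.comp (continuous_const.mul h1)
  -- transfer F to Euclidean space
  have hvp := EuclideanSpace.volume_preserving_symm_measurableEquiv_toLp (Fin k)
  have hFe : ∀ w : EuclideanSpace ℝ (Fin k),
      F ((MeasurableEquiv.toLp 2 (Fin k → ℝ)).symm w) = Real.exp (-c * ‖w‖ ^ 2) := by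
    intro w
    have : (((MeasurableEquiv.toLp 2 (Fin k → ℝ)).symm w : Fin k → ℝ) ⬝ᵥ
        ((MeasurableEquiv.toLp 2 (Fin k → ℝ)).symm w : Fin k → ℝ)) = ‖w‖ ^ 2 := by
      rw [← real_inner_self_eq_norm_sq]
      simp [dotProduct, PiLp.inner_apply]
      rw [EuclideanSpace.real_norm_sq_eq]; simp [sq]
    rw [hF]; simp only [this]
  have hFint : Integrable F := by
    rw [← MeasurePreserving.integrable_comp_emb hvp (MeasurableEquiv.measurableEmbedding _)]
    refine (euclid_int k hc).congr (Filter.Eventually.of_forall fun w => ?_)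
    exact (hFe w).symm
  have hFval : ∫ v : Fin k → ℝ, F v = (π / c) ^ ((k : ℝ) / 2) := by
    rw [← hvp.integral_comp (MeasurableEquiv.measurableEmbedding _)]
    rw [show (fun w : EuclideanSpace ℝ (Fin k) => F ((MeasurableEquiv.toLp 2 (Fin k → ℝ)).symm w))
        = fun w => Real.exp (-c * ‖w‖ ^ 2) from funext hFe]
    rw [GaussianFourier.integral_rexp_neg_mul_sq_norm hc, finrank_euclideanSpace_fin]
  -- change of variables u ↦ S u
  have hmap : Measure.map (Matrix.toLin' S) volume
      = ENNReal.ofReal |S.det|⁻¹ • volume := by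
    rw [← abs_inv]; exact Real.map_matrix_volume_pi_eq_smul_volume_pi hdet_ne
  have hcomp : (fun u : Fin k → ℝ => Real.exp (-c * (u ⬝ᵥ M.mulVec u)))
      = F ∘ (Matrix.toLin' S) := by
    funext u; simp [hF, Function.comp, Matrix.toLin'_apply, hq u]
  have hmeas : Measurable (Matrix.toLin' S) := (Matrix.toLin' S).continuous_of_finiteDimensional.measurable
  have hsmul_ne : ENNReal.ofReal |S.det|⁻¹ ≠ ⊤ := ENNReal.ofReal_ne_top
  constructor
  · rw [hcomp]
    have : Integrable F (Measure.map (Matrix.toLin' S) volume) := by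
      rw [hmap]
      exact hFint.smul_measure hsmul_ne
    exact (integrable_map_measure hFcont.aestronglyMeasurable hmeas.aemeasurable).mp this
  · have h1 : ∫ u : Fin k → ℝ, F (Matrix.toLin' S u)
        = ∫ v, F v ∂(Measure.map (Matrix.toLin' S) volume) :=
      (integral_map hmeas.aemeasurable hFcont.aestronglyMeasurable).symm
    rw [hcomp]
    show ∫ u : Fin k → ℝ, F (Matrix.toLin' S u) = _
    rw [h1, hmap, integral_smul_measure, ENNReal.toReal_ofReal (by positivity), hFval,
      habs, smul_eq_mul]
    rw [inv_mul_eq_div]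

section lemmas
variable {k : ℕ} {M : Matrix (Fin k) (Fin k) ℝ} {b : Fin k → ℝ} {τ : ℝ}

lemma det_scaled_pos (hM : M.PosDef) (hτ : 0 < τ) :
    0 < (2 * Real.pi) ^ k * Matrix.det ((τ / 2) • M⁻¹) := by
  have hD : 0 < M.det := hM.det_pos
  rw [Matrix.det_smul, Matrix.det_nonsing_inv, Ring.inverse_eq_inv', Fintype.card_fin]
  exact mul_pos (pow_pos (by positivity) k)
    (mul_pos (pow_pos (by positivity) k) (inv_pos.mpr hD))

lemma Apos (hM : M.PosDef) (hτ : 0 < τ) :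
    0 < ((2 * Real.pi) ^ k * Matrix.det ((τ / 2) • M⁻¹)) ^ (-(1 / 2 : ℝ)) :=
  Real.rpow_pos_of_pos (det_scaled_pos hM hτ) _

lemma pstar_pos (hM : M.PosDef) (hτ : 0 < τ) (u : Fin k → ℝ) : 0 < pstar k M b τ u :=
  mul_pos (Apos hM hτ) (Real.exp_pos _)

lemma quad_expand (hM : M.PosDef) :
    ∀ u : Fin k → ℝ,
      (u + (1 / 2 : ℝ) • M⁻¹.mulVec b) ⬝ᵥ M.mulVec (u + (1 / 2 : ℝ) • M⁻¹.mulVec b)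
      = u ⬝ᵥ M.mulVec u + b ⬝ᵥ u
        + ((1 / 2 : ℝ) • M⁻¹.mulVec b) ⬝ᵥ M.mulVec ((1 / 2 : ℝ) • M⁻¹.mulVec b) := by
  intro u
  set m : Fin k → ℝ := (1 / 2 : ℝ) • M⁻¹.mulVec b with hm
  have hMinv : M * M⁻¹ = 1 := Matrix.mul_nonsing_inv M hM.det_pos.ne'.isUnit
  have hMm : M.mulVec m = (1 / 2 : ℝ) • b := by
    rw [hm, Matrix.mulVec_smul, Matrix.mulVec_mulVec, hMinv, Matrix.one_mulVec]
  have hMT : Mᵀ = M := by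
    have := hM.1
    simpa [Matrix.IsHermitian, Matrix.conjTranspose_eq_transpose_of_trivial] using this
  have hcross : m ⬝ᵥ M.mulVec u = ((1 / 2 : ℝ) • b) ⬝ᵥ u := by
    rw [Matrix.dotProduct_mulVec, ← Matrix.mulVec_transpose, hMT, hMm]
  rw [Matrix.mulVec_add, dotProduct_add, add_dotProduct, add_dotProduct,
    hcross, hMm]
  have h1 : u ⬝ᵥ ((1 / 2 : ℝ) • b) = (1/2) * (b ⬝ᵥ u) := by
    rw [dotProduct_smul, dotProduct_comm]; simp [smul_eq_mul]
  have h2 : ((1 / 2 : ℝ) • b) ⬝ᵥ u = (1/2) * (b ⬝ᵥ u) := by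
    rw [smul_dotProduct]; simp [smul_eq_mul]
  rw [h1, h2]; ring

lemma key_id (hM : M.PosDef) (hτ : 0 < τ) (u : Fin k → ℝ) :
    u ⬝ᵥ M.mulVec u + b ⬝ᵥ u + τ * Real.log (pstar k M b τ u)
      = τ * Real.log (((2 * Real.pi) ^ k * Matrix.det ((τ / 2) • M⁻¹)) ^ (-(1 / 2 : ℝ)))
        - ((1 / 2 : ℝ) • M⁻¹.mulVec b) ⬝ᵥ M.mulVec ((1 / 2 : ℝ) • M⁻¹.mulVec b) := by
  unfold pstar
  rw [Real.log_mul (Apos hM hτ).ne' (Real.exp_ne_zero _), Real.log_exp, quad_expand hM u]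
  field_simp
  ring

lemma pstar_integrable_and_one (hM : M.PosDef) (hτ : 0 < τ) :
    Integrable (pstar k M b τ) ∧ (∫ u : Fin k → ℝ, pstar k M b τ u) = 1 := by
  have hc : 0 < 1 / τ := by positivity
  obtain ⟨hfi, hfv⟩ := pi_quad_gauss k M hM hc
  set m : Fin k → ℝ := (1 / 2 : ℝ) • M⁻¹.mulVec b with hm
  set A : ℝ := ((2 * Real.pi) ^ k * Matrix.det ((τ / 2) • M⁻¹)) ^ (-(1 / 2 : ℝ)) with hA
  have hps : pstar k M b τ = fun u =>
      A * Real.exp (-(1/τ) * ((u + m) ⬝ᵥ M.mulVec (u + m))) := rfl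
  have hint : Integrable (pstar k M b τ) := by
    rw [hps]
    exact (hfi.comp_add_right m).const_mul A
  refine ⟨hint, ?_⟩
  rw [hps]
  rw [integral_const_mul]
  rw [integral_add_right_eq_self (fun u : Fin k → ℝ =>
    Real.exp (-(1/τ) * (u ⬝ᵥ M.mulVec u))) m, hfv]
  -- now pure arithmetic
  have hD : 0 < M.det := hM.det_pos
  have hP : 0 < Real.pi * τ := by positivity
  have hdet : Matrix.det ((τ / 2) • M⁻¹) = (τ/2) ^ k * M.det⁻¹ := by
    rw [Matrix.det_smul, Matrix.det_nonsing_inv, Ring.inverse_eq_inv', Fintype.card_fin]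
  have hbase : (2 * Real.pi) ^ k * Matrix.det ((τ / 2) • M⁻¹)
      = (Real.pi * τ) ^ k * M.det⁻¹ := by
    rw [hdet, ← mul_assoc, ← mul_pow]; ring_nf
  have hπc : Real.pi / (1/τ) = Real.pi * τ := by field_simp
  rw [hA, hbase, hπc]
  have hx : (0:ℝ) < (Real.pi*τ)^k * M.det⁻¹ := by positivity
  rw [Real.rpow_neg hx.le, ← Real.sqrt_eq_rpow, Real.sqrt_mul (by positivity), Real.sqrt_inv]
  have hhalf : (Real.pi*τ) ^ ((k:ℝ)/2) = Real.sqrt ((Real.pi*τ)^k) := by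
    rw [Real.sqrt_eq_rpow, ← Real.rpow_natCast (Real.pi*τ) k, ← Real.rpow_mul hP.le, mul_one_div]
  rw [hhalf]
  have h1 : Real.sqrt ((Real.pi*τ)^k) ≠ 0 := by positivity
  have h2 : Real.sqrt M.det ≠ 0 := by positivity
  field_simp

end lemmas


end AuxProof

/-- The Gaussian `pstar` minimizes the entropy-regularized one-step cost
`∫ (uᵀMu + bᵀu + τ log p(u)) p(u) du` over probability densities `p` on `ℝ^k`. -/
theorem stmt0 (k : ℕ) (hk : 0 < k) (M : Matrix (Fin k) (Fin k) ℝ) (hM : M.PosDef)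
    (b : Fin k → ℝ) (τ : ℝ) (hτ : 0 < τ)
    (p : (Fin k → ℝ) → ℝ) (hp_meas : Measurable p) (hp_nonneg : ∀ u, 0 ≤ p u)
    (hp_prob : (∫ u : Fin k → ℝ, p u) = 1)
    (hp_int : Integrable (fun u : Fin k → ℝ =>
      (u ⬝ᵥ M.mulVec u + b ⬝ᵥ u + τ * Real.log (p u)) * p u)) :
    (∫ u : Fin k → ℝ, (u ⬝ᵥ M.mulVec u + b ⬝ᵥ u + τ * Real.log (p u)) * p u) ≥
      ∫ u : Fin k → ℝ,
        (u ⬝ᵥ M.mulVec u + b ⬝ᵥ u + τ * Real.log (pstar k M b τ u)) * pstar k M b τ u := by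
  set C : ℝ :=
    τ * Real.log (((2 * Real.pi) ^ k * Matrix.det ((τ / 2) • M⁻¹)) ^ (-(1 / 2 : ℝ)))
      - ((1 / 2 : ℝ) • M⁻¹.mulVec b) ⬝ᵥ M.mulVec ((1 / 2 : ℝ) • M⁻¹.mulVec b) with hC
  have hkey : ∀ u : Fin k → ℝ,
      u ⬝ᵥ M.mulVec u + b ⬝ᵥ u + τ * Real.log (pstar k M b τ u) = C :=
    fun u => key_id hM hτ u
  obtain ⟨hpstar_int, hpstar_one⟩ := pstar_integrable_and_one (b := b) hM hτ
  have hRHS : (∫ u : Fin k → ℝ,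
      (u ⬝ᵥ M.mulVec u + b ⬝ᵥ u + τ * Real.log (pstar k M b τ u)) * pstar k M b τ u) = C := by
    have he : (fun u : Fin k → ℝ =>
        (u ⬝ᵥ M.mulVec u + b ⬝ᵥ u + τ * Real.log (pstar k M b τ u)) * pstar k M b τ u)
        = fun u => C * pstar k M b τ u := by
      funext u; rw [hkey u]
    rw [he, integral_const_mul, hpstar_one, mul_one]
  have hp_integrable : Integrable p := by
    by_contra h
    rw [integral_undef h] at hp_prob
    exact one_ne_zero hp_prob.symm
  set g : (Fin k → ℝ) → ℝ :=
    fun u => (Real.log (p u) - Real.log (pstar k M b τ u)) * p u with hg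
  have hdecomp : ∀ u : Fin k → ℝ,
      (u ⬝ᵥ M.mulVec u + b ⬝ᵥ u + τ * Real.log (p u)) * p u = C * p u + τ * g u := by
    intro u
    have h1 : u ⬝ᵥ M.mulVec u + b ⬝ᵥ u
        = C - τ * Real.log (pstar k M b τ u) := by
      have := hkey u; linarith
    rw [hg, h1]; ring
  have hg_int : Integrable g := by
    have h := (hp_int.sub (hp_integrable.const_mul C)).const_mul τ⁻¹
    have he : (fun u : Fin k → ℝ => τ⁻¹ *
        ((u ⬝ᵥ M.mulVec u + b ⬝ᵥ u + τ * Real.log (p u)) * p u - C * p u)) = g := by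
      funext u; rw [hdecomp u]; field_simp; ring
    exact h.congr (Filter.Eventually.of_forall fun u => congrFun he u)
  have hpt : ∀ u : Fin k → ℝ, -g u ≤ pstar k M b τ u - p u := by
    intro u
    rcases eq_or_lt_of_le (hp_nonneg u) with h0 | hpos
    · rw [hg]
      simp only [← h0, mul_zero, neg_zero, sub_zero]
      exact (pstar_pos hM hτ u).le
    · have hps := pstar_pos (b := b) hM hτ u
      have hx : 0 < pstar k M b τ u / p u := div_pos hps hpos
      have hlog := Real.log_le_sub_one_of_pos hx
      rw [Real.log_div hps.ne' hpos.ne'] at hlog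
      have h2 := mul_le_mul_of_nonneg_right hlog hpos.le
      have heq : (pstar k M b τ u / p u - 1) * p u = pstar k M b τ u - p u := by
        field_simp
      rw [heq] at h2
      calc -g u = (Real.log (pstar k M b τ u) - Real.log (p u)) * p u := by rw [hg]; ring
        _ ≤ pstar k M b τ u - p u := h2
  have hint_mono : (∫ u : Fin k → ℝ, -g u) ≤ ∫ u : Fin k → ℝ, (pstar k M b τ u - p u) :=
    integral_mono hg_int.neg (hpstar_int.sub hp_integrable) hpt
  rw [integral_neg, integral_sub hpstar_int hp_integrable, hpstar_one, hp_prob] at hint_mono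
  have hg_nonneg : 0 ≤ ∫ u : Fin k → ℝ, g u := by linarith
  have hLHS : (∫ u : Fin k → ℝ,
      (u ⬝ᵥ M.mulVec u + b ⬝ᵥ u + τ * Real.log (p u)) * p u) = C + τ * ∫ u : Fin k → ℝ, g u := by
    rw [show (fun u : Fin k → ℝ =>
        (u ⬝ᵥ M.mulVec u + b ⬝ᵥ u + τ * Real.log (p u)) * p u)
        = fun u => C * p u + τ * g u from funext hdecomp]
    rw [integral_add (hp_integrable.const_mul C) (hg_int.const_mul τ),
      integral_const_mul, integral_const_mul, hp_prob, mul_one]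
  rw [ge_iff_le, hRHS, hLHS]
  nlinarith [mul_nonneg hτ.le hg_nonneg]
end

section
/- (Boundedness of the covariance update of RPG.) Let K ∈ ℝ^{k×n} be stable, let Σ ∈ ℝ^{k×k} be symmetric positive definite with Σ ⪯ I, and write M := R + γBᵀP_K B. Fix τ ∈ (0, 2σ_min(R)], a ∈ (0, min{ τ/(2‖M‖), σ_min(Σ) }), and a step size η with 0 < η ≤ 2(1−γ)a²/τ. Define Σ' := Σ − (η/(1−γ))·Σ·(M − (τ/2)Σ⁻¹)·Σ. Then aI ⪯ Σ' ⪯ I. -/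
open Matrix


noncomputable def spec {m l : ℕ} (M : Matrix (Fin m) (Fin l) ℝ) : ℝ :=
  ‖LinearMap.toContinuousLinearMap (Matrix.toEuclideanLin M)‖

noncomputable def sigMin {m l : ℕ} (M : Matrix (Fin m) (Fin l) ℝ) : ℝ :=
  sInf {r : ℝ | ∃ x : EuclideanSpace ℝ (Fin l), ‖x‖ = 1 ∧
    r = ‖LinearMap.toContinuousLinearMap (Matrix.toEuclideanLin M) x‖}

noncomputable def frob {m l : ℕ} (M : Matrix (Fin m) (Fin l) ℝ) : ℝ :=
  Real.sqrt (Matrix.trace (Mᵀ * M))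

def loewner {m : ℕ} (X Y : Matrix (Fin m) (Fin m) ℝ) : Prop :=
  (Y - X).PosSemidef

noncomputable def Pmat {n k : ℕ} (γ : ℝ) (A : Matrix (Fin n) (Fin n) ℝ)
    (B : Matrix (Fin n) (Fin k) ℝ) (Q : Matrix (Fin n) (Fin n) ℝ)
    (R : Matrix (Fin k) (Fin k) ℝ) (K : Matrix (Fin k) (Fin n) ℝ) :
    Matrix (Fin n) (Fin n) ℝ :=
  ∑' t : ℕ, γ ^ t • (((A - B * K)ᵀ) ^ t * (Q + Kᵀ * R * K) * (A - B * K) ^ t)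

noncomputable def Emat {n k : ℕ} (γ : ℝ) (A : Matrix (Fin n) (Fin n) ℝ)
    (B : Matrix (Fin n) (Fin k) ℝ) (Q : Matrix (Fin n) (Fin n) ℝ)
    (R : Matrix (Fin k) (Fin k) ℝ) (K : Matrix (Fin k) (Fin n) ℝ) :
    Matrix (Fin k) (Fin n) ℝ :=
  -(γ • (Bᵀ * Pmat γ A B Q R K * (A - B * K))) + R * K

noncomputable def Smat {n k : ℕ} (γ : ℝ) (A : Matrix (Fin n) (Fin n) ℝ)
    (B : Matrix (Fin n) (Fin k) ℝ) (W : Matrix (Fin n) (Fin n) ℝ)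
    (D₀ : Matrix (Fin n) (Fin n) ℝ) (K : Matrix (Fin k) (Fin n) ℝ)
    (Sg : Matrix (Fin k) (Fin k) ℝ) : Matrix (Fin n) (Fin n) ℝ :=
  ∑' t : ℕ, γ ^ t •
    ((A - B * K) ^ t * D₀ * ((A - B * K)ᵀ) ^ t +
      ∑ s ∈ Finset.Icc 1 t,
        (A - B * K) ^ (t - s) * (B * Sg * Bᵀ + W) * ((A - B * K)ᵀ) ^ (t - s))

noncomputable def Cost {n k : ℕ} (γ τ : ℝ) (A : Matrix (Fin n) (Fin n) ℝ)
    (B : Matrix (Fin n) (Fin k) ℝ) (Q : Matrix (Fin n) (Fin n) ℝ)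
    (R : Matrix (Fin k) (Fin k) ℝ) (W : Matrix (Fin n) (Fin n) ℝ)
    (D₀ : Matrix (Fin n) (Fin n) ℝ) (K : Matrix (Fin k) (Fin n) ℝ)
    (Sg : Matrix (Fin k) (Fin k) ℝ) : ℝ :=
  Matrix.trace (D₀ * Pmat γ A B Q R K) +
    (1 / (1 - γ)) *
      (Matrix.trace (Sg * (R + γ • (Bᵀ * Pmat γ A B Q R K * B))) -
        (τ / 2) * ((k : ℝ) + Real.log ((2 * Real.pi) ^ k * Sg.det)) +
        γ * Matrix.trace (W * Pmat γ A B Q R K))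

noncomputable def fent {n k : ℕ} (γ τ : ℝ) (A : Matrix (Fin n) (Fin n) ℝ)
    (B : Matrix (Fin n) (Fin k) ℝ) (Q : Matrix (Fin n) (Fin n) ℝ)
    (R : Matrix (Fin k) (Fin k) ℝ) (K : Matrix (Fin k) (Fin n) ℝ)
    (Sg : Matrix (Fin k) (Fin k) ℝ) : ℝ :=
  (τ / (2 * (1 - γ))) * Real.log Sg.det -
    (1 / (1 - γ)) * Matrix.trace (Sg * (R + γ • (Bᵀ * Pmat γ A B Q R K * B)))


lemma psdSmul {k : ℕ} {c : ℝ} {S : Matrix (Fin k) (Fin k) ℝ} (hc : 0 ≤ c)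
    (hS : S.PosSemidef) : (c • S).PosSemidef := by
  refine Matrix.PosSemidef.of_dotProduct_mulVec_nonneg ?_ (fun x => ?_)
  · unfold Matrix.IsHermitian
    rw [conjTranspose_smul, hS.1.eq]
    simp
  · have := hS.dotProduct_mulVec_nonneg x
    simp only [smul_mulVec, dotProduct_smul, smul_eq_mul]
    positivity

lemma dot_eq_inner {k : ℕ} (x y : EuclideanSpace ℝ (Fin k)) :
    (WithLp.equiv 2 (Fin k → ℝ)) x ⬝ᵥ (WithLp.equiv 2 (Fin k → ℝ)) y = inner ℝ x y := by
  simp [PiLp.inner_apply, dotProduct, RCLike.inner_apply, mul_comm]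

lemma specLoewner {k : ℕ} (M : Matrix (Fin k) (Fin k) ℝ) (hM : M.IsHermitian) :
    (spec M • (1 : Matrix (Fin k) (Fin k) ℝ) - M).PosSemidef := by
  refine Matrix.PosSemidef.of_dotProduct_mulVec_nonneg ?_ (fun x => ?_)
  · unfold Matrix.IsHermitian
    rw [conjTranspose_sub, conjTranspose_smul, hM.eq]
    simp
  · set L := LinearMap.toContinuousLinearMap (Matrix.toEuclideanLin M) with hL
    set y : EuclideanSpace ℝ (Fin k) := (WithLp.equiv 2 (Fin k → ℝ)).symm x with hy
    have hxy : (WithLp.equiv 2 (Fin k → ℝ)) y = x := by simp [hy]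
    have hLy : (WithLp.equiv 2 (Fin k → ℝ)) (L y) = M *ᵥ x := by
      simp [hL, Matrix.toEuclideanLin_apply, hy]
    have h1 : x ⬝ᵥ (M *ᵥ x) = inner ℝ y (L y) := by
      rw [← hLy, ← hxy, dot_eq_inner]
    have h2 : x ⬝ᵥ x = ‖y‖ ^ 2 := by
      rw [← hxy, dot_eq_inner y y, real_inner_self_eq_norm_sq]
    have h3 : inner ℝ y (L y) ≤ spec M * ‖y‖ ^ 2 := by
      calc inner ℝ y (L y) ≤ ‖y‖ * ‖L y‖ := real_inner_le_norm y (L y)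
        _ ≤ ‖y‖ * (‖L‖ * ‖y‖) := by
            have := L.le_opNorm y
            nlinarith [norm_nonneg y]
        _ = spec M * ‖y‖ ^ 2 := by unfold spec; rw [← hL]; ring
    simp only [star_trivial, sub_mulVec, dotProduct_sub, smul_mulVec, one_mulVec,
      dotProduct_smul, smul_eq_mul]
    rw [h1, h2]
    linarith [h3]

lemma sigMin_le_eigen {k : ℕ} {S : Matrix (Fin k) (Fin k) ℝ} (hS : S.PosDef) (i : Fin k) :
    sigMin S ≤ hS.1.eigenvalues i := by
  set L := LinearMap.toContinuousLinearMap (Matrix.toEuclideanLin S) with hL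
  set v : EuclideanSpace ℝ (Fin k) := hS.1.eigenvectorBasis i with hv
  have hnv : ‖v‖ = 1 := hS.1.eigenvectorBasis.orthonormal.1 i
  have hpos : 0 < hS.1.eigenvalues i := hS.eigenvalues_pos i
  have hLv : L v = hS.1.eigenvalues i • v := by
    apply (WithLp.equiv 2 (Fin k → ℝ)).injective
    simp only [hL, LinearMap.coe_toContinuousLinearMap', Matrix.toEuclideanLin_apply]
    simp only [WithLp.equiv_apply, WithLp.ofLp_toLp, Equiv.apply_symm_apply]
    rw [hS.1.mulVec_eigenvectorBasis i]
    simp [hv]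
  have hmem : hS.1.eigenvalues i ∈ {r : ℝ | ∃ x : EuclideanSpace ℝ (Fin k), ‖x‖ = 1 ∧
      r = ‖LinearMap.toContinuousLinearMap (Matrix.toEuclideanLin S) x‖} := by
    refine ⟨v, hnv, ?_⟩
    rw [← hL, hLv, norm_smul, hnv]
    simp [abs_of_pos hpos]
  refine csInf_le ⟨0, fun r hr => ?_⟩ hmem
  obtain ⟨x, hx, rfl⟩ := hr
  exact norm_nonneg _

lemma eig_le_one {k : ℕ} {S : Matrix (Fin k) (Fin k) ℝ} (hS : S.IsHermitian)
    (h1 : ((1 : Matrix (Fin k) (Fin k) ℝ) - S).PosSemidef) (i : Fin k) :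
    hS.eigenvalues i ≤ 1 := by
  set v : EuclideanSpace ℝ (Fin k) := hS.eigenvectorBasis i with hv
  set x : Fin k → ℝ := (WithLp.equiv 2 (Fin k → ℝ)) v with hx
  have hnx : x ⬝ᵥ x = 1 := by
    rw [hx, dot_eq_inner, real_inner_self_eq_norm_sq, hS.eigenvectorBasis.orthonormal.1 i]
    norm_num
  have hmv : S *ᵥ x = hS.eigenvalues i • x := hS.mulVec_eigenvectorBasis i
  have := h1.dotProduct_mulVec_nonneg x
  simp only [star_trivial, sub_mulVec, one_mulVec, dotProduct_sub, hmv,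
    dotProduct_smul, smul_eq_mul, hnx] at this
  linarith

lemma polyPSD {k : ℕ} {S : Matrix (Fin k) (Fin k) ℝ} (hS : S.IsHermitian) (c0 c1 c2 : ℝ)
    (hf : ∀ i, 0 ≤ c0 + c1 * hS.eigenvalues i + c2 * (hS.eigenvalues i * hS.eigenvalues i)) :
    (c0 • (1 : Matrix (Fin k) (Fin k) ℝ) + c1 • S + c2 • (S * S)).PosSemidef := by
  set U : Matrix (Fin k) (Fin k) ℝ := ↑hS.eigenvectorUnitary with hU
  set D : Matrix (Fin k) (Fin k) ℝ := diagonal hS.eigenvalues with hD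
  have hSD : S = U * D * star U := by
    have := hS.spectral_theorem
    simpa [hU, hD] using this
  have hUU : star U * U = 1 := hS.eigenvectorUnitary.2.1
  have hUU' : U * star U = 1 := hS.eigenvectorUnitary.2.2
  have key : c0 • (1 : Matrix (Fin k) (Fin k) ℝ) + c1 • S + c2 • (S * S) =
      U * (diagonal (fun i => c0 + c1 * hS.eigenvalues i +
        c2 * (hS.eigenvalues i * hS.eigenvalues i))) * star U := by
    have hdd : (diagonal (fun i => c0 + c1 * hS.eigenvalues i +
        c2 * (hS.eigenvalues i * hS.eigenvalues i)) : Matrix (Fin k) (Fin k) ℝ) =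
        c0 • 1 + c1 • D + c2 • (D * D) := by
      rw [hD, diagonal_mul_diagonal, ← diagonal_one]
      ext a b
      by_cases h : a = b <;> simp [Matrix.diagonal_apply, h]
    rw [hdd, hSD]
    have hsq : (U * D * star U) * (U * D * star U) = U * (D * D) * star U := by
      calc (U * D * star U) * (U * D * star U) = U * D * (star U * U) * D * star U := by
            simp only [Matrix.mul_assoc]
        _ = U * (D * D) * star U := by rw [hUU]; simp only [Matrix.mul_one, Matrix.mul_assoc]
    rw [hsq]
    simp only [Matrix.mul_add, Matrix.add_mul, Matrix.mul_smul, Matrix.smul_mul,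
      Matrix.mul_one, hUU']
  rw [key]
  have hdiag : (diagonal (fun i => c0 + c1 * hS.eigenvalues i +
      c2 * (hS.eigenvalues i * hS.eigenvalues i)) : Matrix (Fin k) (Fin k) ℝ).PosSemidef :=
    Matrix.posSemidef_diagonal_iff.mpr hf
  have := hdiag.mul_mul_conjTranspose_same U
  simpa [Matrix.star_eq_conjTranspose] using this

lemma pmat_term_posSemidef {n k : ℕ} {γ : ℝ} {A : Matrix (Fin n) (Fin n) ℝ}
    {B : Matrix (Fin n) (Fin k) ℝ} {Q : Matrix (Fin n) (Fin n) ℝ}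
    {R : Matrix (Fin k) (Fin k) ℝ} {K : Matrix (Fin k) (Fin n) ℝ}
    (hγ : 0 ≤ γ) (hQ : Q.PosSemidef) (hR : R.PosSemidef) (t : ℕ) :
    (γ ^ t • (((A - B * K)ᵀ) ^ t * (Q + Kᵀ * R * K) * (A - B * K) ^ t)).PosSemidef := by
  have hKRK : (Kᵀ * R * K).PosSemidef := by
    have := hR.conjTranspose_mul_mul_same K
    simpa [conjTranspose_eq_transpose_of_trivial] using this
  have hS : (Q + Kᵀ * R * K).PosSemidef := hQ.add hKRK
  have hconj := hS.conjTranspose_mul_mul_same ((A - B * K) ^ t)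
  rw [conjTranspose_eq_transpose_of_trivial, transpose_pow] at hconj
  exact psdSmul (pow_nonneg hγ t) hconj

lemma pmat_posSemidef {n k : ℕ} {γ : ℝ} {A : Matrix (Fin n) (Fin n) ℝ}
    {B : Matrix (Fin n) (Fin k) ℝ} {Q : Matrix (Fin n) (Fin n) ℝ}
    {R : Matrix (Fin k) (Fin k) ℝ} {K : Matrix (Fin k) (Fin n) ℝ}
    (hγ : 0 ≤ γ) (hQ : Q.PosSemidef) (hR : R.PosSemidef) :
    (Pmat γ A B Q R K).PosSemidef := by
  set f : ℕ → Matrix (Fin n) (Fin n) ℝ :=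
    fun t => γ ^ t • (((A - B * K)ᵀ) ^ t * (Q + Kᵀ * R * K) * (A - B * K) ^ t) with hf
  have hft : ∀ t, (f t).PosSemidef := fun t => pmat_term_posSemidef hγ hQ hR t
  have hherm : (Pmat γ A B Q R K).IsHermitian := by
    unfold Matrix.IsHermitian
    rw [conjTranspose_eq_transpose_of_trivial, Pmat, transpose_tsum]
    congr 1
    funext t
    have h2 : (f t)ᴴ = f t := (hft t).1
    rw [conjTranspose_eq_transpose_of_trivial] at h2
    exact h2
  by_cases hsum : Summable f
  · refine Matrix.PosSemidef.of_dotProduct_mulVec_nonneg hherm (fun x => ?_)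
    let ℓ : Matrix (Fin n) (Fin n) ℝ →ₗ[ℝ] ℝ :=
      { toFun := fun M => x ⬝ᵥ M *ᵥ x
        map_add' := fun M N => by simp [add_mulVec, dotProduct_add]
        map_smul' := fun c M => by simp [smul_mulVec, dotProduct_smul] }
    have hcont : Continuous ℓ := ℓ.continuous_of_finiteDimensional
    have hhs : HasSum (⇑ℓ ∘ f) (ℓ (Pmat γ A B Q R K)) := by
      have := hsum.hasSum.map ℓ hcont
      rwa [Pmat, ← hf]
    have h0 : ∀ t, 0 ≤ (⇑ℓ ∘ f) t := fun t => by show 0 ≤ x ⬝ᵥ f t *ᵥ x; simpa using (hft t).dotProduct_mulVec_nonneg x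
    have := hhs.tsum_eq
    have hnn := tsum_nonneg (L := SummationFilter.unconditional ℕ) h0
    rw [this] at hnn
    simpa using (show 0 ≤ x ⬝ᵥ Pmat γ A B Q R K *ᵥ x from hnn)
  · have : Pmat γ A B Q R K = 0 := by
      rw [Pmat, ← hf]  -- ?
      exact tsum_eq_zero_of_not_summable hsum
    rw [this]
    exact ⟨by simp [Matrix.IsHermitian], fun x => by simp⟩

set_option maxHeartbeats 1000000 in
/-- Boundedness of the covariance update of regularized policy gradient:
the updated covariance stays between `a•I` and `I`. -/
theorem stmt6 (n k : ℕ) (hn : 0 < n) (hk : 0 < k)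
    (γ τ : ℝ) (hγ0 : 0 < γ) (hγ1 : γ < 1) (hτ0 : 0 < τ)
    (A : Matrix (Fin n) (Fin n) ℝ) (B : Matrix (Fin n) (Fin k) ℝ)
    (Q : Matrix (Fin n) (Fin n) ℝ) (hQ : Q.PosSemidef)
    (R : Matrix (Fin k) (Fin k) ℝ) (hR : R.PosDef)
    (K : Matrix (Fin k) (Fin n) ℝ) (hK : spec (A - B * K) < 1 / Real.sqrt γ)
    (Sg : Matrix (Fin k) (Fin k) ℝ) (hSg : Sg.PosDef)
    (hSgI : loewner Sg (1 : Matrix (Fin k) (Fin k) ℝ))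
    (hτR : τ ≤ 2 * sigMin R)
    (a : ℝ) (ha0 : 0 < a)
    (ha : a < min (τ / (2 * spec (R + γ • (Bᵀ * Pmat γ A B Q R K * B)))) (sigMin Sg))
    (η : ℝ) (hη0 : 0 < η) (hη : η ≤ 2 * (1 - γ) * a ^ 2 / τ)
    (Sg' : Matrix (Fin k) (Fin k) ℝ)
    (hSg'def : Sg' = Sg - (η / (1 - γ)) •
      (Sg * ((R + γ • (Bᵀ * Pmat γ A B Q R K * B)) - (τ / 2) • Sg⁻¹) * Sg)) :
    loewner (a • (1 : Matrix (Fin k) (Fin k) ℝ)) Sg' ∧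
      loewner Sg' (1 : Matrix (Fin k) (Fin k) ℝ) := by
  obtain ⟨ha1, ha2⟩ := lt_min_iff.mp ha
  set P := Pmat γ A B Q R K with hP
  set M := R + γ • (Bᵀ * P * B) with hM
  have hγle : (0:ℝ) ≤ γ := le_of_lt hγ0
  have hPpsd : P.PosSemidef := pmat_posSemidef hγle hQ hR.posSemidef
  have hBPB : (γ • (Bᵀ * P * B)).PosSemidef := by
    refine psdSmul hγle ?_
    have := hPpsd.conjTranspose_mul_mul_same B
    simpa [conjTranspose_eq_transpose_of_trivial] using this
  have hMherm : M.IsHermitian := by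
    rw [hM]; exact (hR.posSemidef.1).add hBPB.1
  have hSgherm : Sg.IsHermitian := hSg.1
  have h1γ : (0:ℝ) < 1 - γ := by linarith
  set c := η / (1 - γ) with hc
  set m := spec M with hm
  have hm0 : (0:ℝ) ≤ m := norm_nonneg _
  have hmpos : 0 < m := by
    rcases eq_or_lt_of_le hm0 with h | h
    · exfalso; rw [← h] at ha1; simp at ha1; linarith
    · exact h
  have ham : 2 * (a * m) < τ := by
    rw [lt_div_iff₀ (by positivity)] at ha1; linarith
  have hc0 : 0 < c := div_pos hη0 h1γ
  have hcτ : c * τ ≤ 2 * a ^ 2 := by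
    rw [hc, div_mul_eq_mul_div, div_le_iff₀ h1γ]
    have h1 := mul_le_mul_of_nonneg_right hη hτ0.le
    rw [div_mul_cancel₀ _ (ne_of_gt hτ0)] at h1
    nlinarith
  have hδa : c * m < a := by nlinarith [mul_lt_mul_of_pos_left ham hc0]
  have haδβ : a * (c * m) ≤ c * (τ / 2) := by
    nlinarith [mul_le_mul_of_nonneg_left (by linarith : a * m ≤ τ / 2) hc0.le]
  have hβa2 : c * (τ / 2) ≤ a ^ 2 := by linarith
  have hlow : ∀ i, a < hSgherm.eigenvalues i :=
    fun i => lt_of_lt_of_le ha2 (sigMin_le_eigen hSg i)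
  have h1Sg : ((1 : Matrix (Fin k) (Fin k) ℝ) - Sg).PosSemidef := hSgI
  have hup : ∀ i, hSgherm.eigenvalues i ≤ 1 := fun i => eig_le_one hSgherm h1Sg i
  have ha1' : a < 1 := lt_of_lt_of_le (hlow ⟨0, hk⟩) (hup ⟨0, hk⟩)
  have hRτ : (R - (τ / 2) • (1 : Matrix (Fin k) (Fin k) ℝ)).PosSemidef := by
    have hf : ∀ i, 0 ≤ (-(τ/2)) + 1 * hR.1.eigenvalues i +
        0 * (hR.1.eigenvalues i * hR.1.eigenvalues i) := by
      intro i
      have := sigMin_le_eigen hR i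
      simp only [one_mul, zero_mul, add_zero]
      linarith
    have h2 := polyPSD hR.1 (-(τ/2)) 1 0 hf
    have h3 : (-(τ/2)) • (1 : Matrix (Fin k) (Fin k) ℝ) + (1:ℝ) • R + (0:ℝ) • (R * R) =
        R - (τ / 2) • (1 : Matrix (Fin k) (Fin k) ℝ) := by module
    rwa [h3] at h2
  have hMτ : (M - (τ / 2) • (1 : Matrix (Fin k) (Fin k) ℝ)).PosSemidef := by
    have h4 : M - (τ / 2) • (1 : Matrix (Fin k) (Fin k) ℝ) =
        (R - (τ / 2) • (1 : Matrix (Fin k) (Fin k) ℝ)) + γ • (Bᵀ * P * B) := by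
      rw [hM]; module
    rw [h4]; exact hRτ.add hBPB
  have hspecM : (m • (1 : Matrix (Fin k) (Fin k) ℝ) - M).PosSemidef := specLoewner M hMherm
  have hdet : IsUnit Sg.det := isUnit_iff_ne_zero.mpr (ne_of_gt hSg.det_pos)
  have hSginv : Sg * Sg⁻¹ = 1 := mul_nonsing_inv Sg hdet
  have hmid : Sg * (M - (τ / 2) • Sg⁻¹) * Sg = (Sg * M) * Sg - (τ / 2) • Sg := by
    rw [Matrix.mul_sub, Matrix.sub_mul, Matrix.mul_smul, Matrix.smul_mul, hSginv,
      Matrix.one_mul]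
  have hSg'2 : Sg' = Sg - c • ((Sg * M) * Sg) + (c * (τ / 2)) • Sg := by
    rw [hSg'def, hmid, smul_sub, smul_smul]
    abel
  have hN : ((-a) • (1 : Matrix (Fin k) (Fin k) ℝ) + (1 + c * (τ / 2)) • Sg +
      (-(c * m)) • (Sg * Sg)).PosSemidef := by
    refine polyPSD hSgherm _ _ _ (fun i => ?_)
    set x := hSgherm.eigenvalues i with hx
    have hax : a < x := hlow i
    have hx1 : x ≤ 1 := hup i
    have key : (1 - a) * ((-a) + (1 + c * (τ / 2)) * x + (-(c * m)) * (x * x)) =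
        (a * (c * (τ / 2)) - (c * m) * (a * a)) * (1 - x) +
        (1 + c * (τ / 2) - c * m - a) * (x - a) +
        (c * m) * (1 - a) * ((x - a) * (1 - x)) := by ring
    have t1 : 0 ≤ a * (c * (τ / 2)) - (c * m) * (a * a) := by nlinarith
    have t2 : 0 ≤ 1 + c * (τ / 2) - c * m - a := by nlinarith
    have hcm0 : 0 ≤ c * m := by positivity
    nlinarith [mul_nonneg (mul_nonneg hcm0 (by linarith : (0:ℝ) ≤ 1 - a))
      (mul_nonneg (by linarith : (0:ℝ) ≤ x - a) (by linarith : (0:ℝ) ≤ 1 - x)),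
      mul_nonneg t1 (by linarith : (0:ℝ) ≤ 1 - x),
      mul_nonneg t2 (by linarith : (0:ℝ) ≤ x - a)]
  constructor
  · show (Sg' - a • (1 : Matrix (Fin k) (Fin k) ℝ)).PosSemidef
    have hconj : ((Sg * (m • (1 : Matrix (Fin k) (Fin k) ℝ) - M)) * Sg).PosSemidef := by
      have h5 := hspecM.conjTranspose_mul_mul_same Sg
      rwa [hSgherm.eq] at h5
    have hid : Sg' - a • (1 : Matrix (Fin k) (Fin k) ℝ) =
        ((-a) • (1 : Matrix (Fin k) (Fin k) ℝ) + (1 + c * (τ / 2)) • Sg +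
          (-(c * m)) • (Sg * Sg)) + c • ((Sg * (m • (1 : Matrix (Fin k) (Fin k) ℝ) - M)) * Sg) := by
      rw [hSg'2]
      simp only [Matrix.mul_sub, Matrix.sub_mul, Matrix.mul_smul, Matrix.smul_mul,
        Matrix.mul_one, Matrix.one_mul]
      module
    rw [hid]
    exact hN.add (psdSmul hc0.le hconj)
  · show ((1 : Matrix (Fin k) (Fin k) ℝ) - Sg').PosSemidef
    have hconj2 : ((Sg * (M - (τ / 2) • (1 : Matrix (Fin k) (Fin k) ℝ))) * Sg).PosSemidef := by
      have h5 := hMτ.conjTranspose_mul_mul_same Sg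
      rwa [hSgherm.eq] at h5
    have hsq : (((1 : Matrix (Fin k) (Fin k) ℝ) - Sg) *
        ((1 : Matrix (Fin k) (Fin k) ℝ) - Sg)).PosSemidef := by
      have h6 := Matrix.posSemidef_conjTranspose_mul_self ((1 : Matrix (Fin k) (Fin k) ℝ) - Sg)
      rwa [h1Sg.1.eq] at h6
    have hid2 : (1 : Matrix (Fin k) (Fin k) ℝ) - Sg' =
        (1 - c * (τ / 2)) • ((1 : Matrix (Fin k) (Fin k) ℝ) - Sg) +
        (c * (τ / 2)) • (((1 : Matrix (Fin k) (Fin k) ℝ) - Sg) * ((1 : Matrix (Fin k) (Fin k) ℝ) - Sg)) +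
        c • ((Sg * (M - (τ / 2) • (1 : Matrix (Fin k) (Fin k) ℝ))) * Sg) := by
      rw [hSg'2]
      simp only [Matrix.mul_sub, Matrix.sub_mul, Matrix.mul_smul, Matrix.smul_mul,
        Matrix.mul_one, Matrix.one_mul]
      module
    have hβ1 : 0 ≤ 1 - c * (τ / 2) := by nlinarith
    rw [hid2]
    exact ((psdSmul hβ1 h1Sg).add (psdSmul (by positivity) hsq)).add (psdSmul hc0.le hconj2)
end

section
/- (Perturbation of the discounted state correlation matrix.) Let ρ ∈ (0,1), let K₁, K₂ ∈ ℝ^{k×n} satisfy ‖A−BK₁‖ ≤ ρ and ‖A−BK₂‖ ≤ ρ, and let Σ₁, Σ₂ ∈ ℝ^{k×k} be symmetric positive semidefinite. Then ‖S_{K₁,Σ₁} − S_{K₂,Σ₂}‖ ≤ ( ξ_{γ,ρ}·‖D₀‖ + ζ_{γ,ρ}·‖BΣ₁Bᵀ + W‖ )·2ρ‖B‖·‖K₁ − K₂‖ + ω_{γ,ρ}·‖B‖²·‖Σ₁ − Σ₂‖. -/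
open Matrix


section helpers
open scoped Matrix.Norms.L2Operator

lemma spec_eq_norm {m l : ℕ} (M : Matrix (Fin m) (Fin l) ℝ) : spec M = ‖M‖ := rfl

lemma normT {m l : ℕ} (M : Matrix (Fin m) (Fin l) ℝ) : ‖Mᵀ‖ = ‖M‖ := by
  have h : Mᴴ = Mᵀ := by ext i j; simp [Matrix.conjTranspose_apply]
  rw [← h, Matrix.l2_opNorm_conjTranspose]

lemma mnorm_pow_le {n : ℕ} {ρ : ℝ} (hρ : 0 ≤ ρ) (L : Matrix (Fin n) (Fin n) ℝ)
    (hL : ‖L‖ ≤ ρ) (t : ℕ) : ‖L ^ t‖ ≤ ρ ^ t := by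
  induction t with
  | zero =>
    simp only [pow_zero]
    rw [Matrix.cstar_norm_def, _root_.map_one]
    exact ContinuousLinearMap.norm_id_le
  | succ t ih =>
    calc ‖L ^ (t + 1)‖ = ‖L ^ t * L‖ := by rw [pow_succ]
      _ ≤ ‖L ^ t‖ * ‖L‖ := Matrix.l2_opNorm_mul _ _
      _ ≤ ρ ^ t * ρ := mul_le_mul ih hL (norm_nonneg _) (by positivity)
      _ = ρ ^ (t + 1) := (pow_succ ρ t).symm

lemma mpow_sub_le {n : ℕ} {ρ : ℝ} (hρ : 0 ≤ ρ) (L₁ L₂ : Matrix (Fin n) (Fin n) ℝ)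
    (h₁ : ‖L₁‖ ≤ ρ) (h₂ : ‖L₂‖ ≤ ρ) (t : ℕ) :
    ‖L₁ ^ t - L₂ ^ t‖ * ρ ≤ t * ρ ^ t * ‖L₁ - L₂‖ := by
  induction t with
  | zero => simp
  | succ t ih =>
    have key : L₁ ^ (t + 1) - L₂ ^ (t + 1)
        = (L₁ ^ t - L₂ ^ t) * L₁ + L₂ ^ t * (L₁ - L₂) := by
      rw [pow_succ, pow_succ]; noncomm_ring
    have h3 : ‖L₁ ^ (t + 1) - L₂ ^ (t + 1)‖ ≤ ‖L₁ ^ t - L₂ ^ t‖ * ρ + ρ ^ t * ‖L₁ - L₂‖ := by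
      rw [key]
      refine (norm_add_le _ _).trans (add_le_add ?_ ?_)
      · exact (Matrix.l2_opNorm_mul _ _).trans
          (mul_le_mul_of_nonneg_left h₁ (norm_nonneg _))
      · exact (Matrix.l2_opNorm_mul _ _).trans
          (mul_le_mul_of_nonneg_right (mnorm_pow_le hρ _ h₂ t) (norm_nonneg _))
    calc ‖L₁ ^ (t + 1) - L₂ ^ (t + 1)‖ * ρ
        ≤ (‖L₁ ^ t - L₂ ^ t‖ * ρ + ρ ^ t * ‖L₁ - L₂‖) * ρ :=
          mul_le_mul_of_nonneg_right h3 hρ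
      _ = (‖L₁ ^ t - L₂ ^ t‖ * ρ) * ρ + ρ ^ (t + 1) * ‖L₁ - L₂‖ := by ring
      _ ≤ (t * ρ ^ t * ‖L₁ - L₂‖) * ρ + ρ ^ (t + 1) * ‖L₁ - L₂‖ := by
          have := mul_le_mul_of_nonneg_right ih hρ
          linarith
      _ = (↑(t + 1)) * ρ ^ (t + 1) * ‖L₁ - L₂‖ := by push_cast; ring

lemma mconj_sub_le {n : ℕ} {ρ : ℝ} (hρ : 0 ≤ ρ) (L₁ L₂ X : Matrix (Fin n) (Fin n) ℝ)
    (h₁ : ‖L₁‖ ≤ ρ) (h₂ : ‖L₂‖ ≤ ρ) (j : ℕ) :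
    ‖L₁ ^ j * X * (L₁ ^ j)ᵀ - L₂ ^ j * X * (L₂ ^ j)ᵀ‖ * ρ
      ≤ 2 * j * ρ ^ (2 * j) * ‖X‖ * ‖L₁ - L₂‖ := by
  have key : L₁ ^ j * X * (L₁ ^ j)ᵀ - L₂ ^ j * X * (L₂ ^ j)ᵀ
      = (L₁ ^ j - L₂ ^ j) * X * (L₁ ^ j)ᵀ + L₂ ^ j * X * (L₁ ^ j - L₂ ^ j)ᵀ := by
    rw [Matrix.transpose_sub]; noncomm_ring
  have hT1 : ‖(L₁ ^ j)ᵀ‖ ≤ ρ ^ j := by rw [normT]; exact mnorm_pow_le hρ _ h₁ j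
  have e1 : ‖(L₁ ^ j - L₂ ^ j) * X * (L₁ ^ j)ᵀ‖ ≤ ‖L₁ ^ j - L₂ ^ j‖ * ‖X‖ * ρ ^ j := by
    refine (Matrix.l2_opNorm_mul _ _).trans ?_
    exact mul_le_mul ((Matrix.l2_opNorm_mul _ _)) hT1 (norm_nonneg _)
      (mul_nonneg (norm_nonneg _) (norm_nonneg _))
  have e2 : ‖L₂ ^ j * X * (L₁ ^ j - L₂ ^ j)ᵀ‖ ≤ ρ ^ j * ‖X‖ * ‖L₁ ^ j - L₂ ^ j‖ := by
    refine (Matrix.l2_opNorm_mul _ _).trans ?_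
    rw [normT]
    refine mul_le_mul ?_ le_rfl (norm_nonneg _) (by positivity)
    exact (Matrix.l2_opNorm_mul _ _).trans
      (mul_le_mul_of_nonneg_right (mnorm_pow_le hρ _ h₂ j) (norm_nonneg _))
  have hb : ‖L₁ ^ j * X * (L₁ ^ j)ᵀ - L₂ ^ j * X * (L₂ ^ j)ᵀ‖
      ≤ 2 * ρ ^ j * ‖X‖ * ‖L₁ ^ j - L₂ ^ j‖ := by
    rw [key]
    calc ‖(L₁ ^ j - L₂ ^ j) * X * (L₁ ^ j)ᵀ + L₂ ^ j * X * (L₁ ^ j - L₂ ^ j)ᵀ‖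
        ≤ ‖(L₁ ^ j - L₂ ^ j) * X * (L₁ ^ j)ᵀ‖ + ‖L₂ ^ j * X * (L₁ ^ j - L₂ ^ j)ᵀ‖ :=
          norm_add_le _ _
      _ ≤ ‖L₁ ^ j - L₂ ^ j‖ * ‖X‖ * ρ ^ j + ρ ^ j * ‖X‖ * ‖L₁ ^ j - L₂ ^ j‖ :=
          add_le_add e1 e2
      _ = 2 * ρ ^ j * ‖X‖ * ‖L₁ ^ j - L₂ ^ j‖ := by ring
  calc ‖L₁ ^ j * X * (L₁ ^ j)ᵀ - L₂ ^ j * X * (L₂ ^ j)ᵀ‖ * ρ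
      ≤ (2 * ρ ^ j * ‖X‖ * ‖L₁ ^ j - L₂ ^ j‖) * ρ := mul_le_mul_of_nonneg_right hb hρ
    _ = (2 * ρ ^ j * ‖X‖) * (‖L₁ ^ j - L₂ ^ j‖ * ρ) := by ring
    _ ≤ (2 * ρ ^ j * ‖X‖) * (j * ρ ^ j * ‖L₁ - L₂‖) := by
        refine mul_le_mul_of_nonneg_left (mpow_sub_le hρ _ _ h₁ h₂ j) (by positivity)
    _ = 2 * j * ρ ^ (2 * j) * ‖X‖ * ‖L₁ - L₂‖ := by ring

end helpers

lemma arith_split (a m bb δ ρ γ : ℝ) (hρ : ρ ≠ 0) (hp : 1-ρ^2 ≠ 0) (hg : 1-γ ≠ 0)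
    (hc : 1-γ*ρ^2 ≠ 0) :
    (2*a*δ/ρ)*(γ*ρ^2/(1-γ*ρ^2)^2) + ((2*m*δ/ρ)*(ρ^2/(1-ρ^2)^2) + bb*(1-ρ^2)⁻¹)*(1-γ)⁻¹
    = a*δ*(2*γ*ρ/(1-γ*ρ^2)^2) + m*δ*(2*ρ/((1-ρ^2)^2*(1-γ))) + bb*(1/((1-ρ^2)*(1-γ))) := by
  field_simp
  ring

set_option maxHeartbeats 1000000 in
open scoped Matrix.Norms.L2Operator in

/-- Perturbation bound for the discounted state correlation matrix `S_{K,Σ}`. -/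
theorem stmt13 (n k : ℕ) (hn : 0 < n) (hk : 0 < k)
    (γ : ℝ) (hγ0 : 0 < γ) (hγ1 : γ < 1)
    (A : Matrix (Fin n) (Fin n) ℝ) (B : Matrix (Fin n) (Fin k) ℝ)
    (W : Matrix (Fin n) (Fin n) ℝ) (hW : W.PosSemidef)
    (D₀ : Matrix (Fin n) (Fin n) ℝ) (hD₀ : D₀.PosSemidef)
    (ρ : ℝ) (hρ0 : 0 < ρ) (hρ1 : ρ < 1)
    (K₁ K₂ : Matrix (Fin k) (Fin n) ℝ)
    (hK₁ : spec (A - B * K₁) ≤ ρ) (hK₂ : spec (A - B * K₂) ≤ ρ)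
    (Sg₁ Sg₂ : Matrix (Fin k) (Fin k) ℝ)
    (hSg₁ : Sg₁.PosSemidef) (hSg₂ : Sg₂.PosSemidef) :
    spec (Smat γ A B W D₀ K₁ Sg₁ - Smat γ A B W D₀ K₂ Sg₂) ≤
      ((1 - γ * ρ ^ 2 + γ) / (1 - γ * ρ ^ 2) ^ 2 * spec D₀ +
          ((2 - ρ ^ 2) / ((1 - ρ ^ 2) ^ 2 * (1 - γ)) +
            1 / ((1 - ρ ^ 2) ^ 2 * (1 - γ * ρ ^ 2))) * spec (B * Sg₁ * Bᵀ + W)) *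
        (2 * ρ * spec B) * spec (K₁ - K₂) +
      (1 / ((1 - ρ ^ 2) * (1 - γ)) + 1 / ((1 - ρ ^ 2) * (1 - γ * ρ ^ 2))) *
        spec B ^ 2 * spec (Sg₁ - Sg₂) := by
  have hρ : (0:ℝ) ≤ ρ := hρ0.le
  simp only [spec_eq_norm] at hK₁ hK₂ ⊢
  have hp : (0:ℝ) < 1 - ρ^2 := by nlinarith
  have hg : (0:ℝ) < 1 - γ := by linarith
  have hc : (0:ℝ) < 1 - γ*ρ^2 := by nlinarith
  have hρ2 : (0:ℝ) ≤ ρ^2 := by positivity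
  have hρ2lt : ρ^2 < 1 := by nlinarith
  have hγρlt : γ*ρ^2 < 1 := by nlinarith
  have hγρ0 : (0:ℝ) ≤ γ*ρ^2 := by positivity
  have hρne : ρ ≠ 0 := ne_of_gt hρ0
  have hpne : (1 - ρ^2) ≠ 0 := ne_of_gt hp
  have hgne : (1 - γ) ≠ 0 := ne_of_gt hg
  have hcne : (1 - γ*ρ^2) ≠ 0 := ne_of_gt hc
  set L₁ : Matrix (Fin n) (Fin n) ℝ := A - B * K₁ with hL1d
  set L₂ : Matrix (Fin n) (Fin n) ℝ := A - B * K₂ with hL2d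
  set M₁ : Matrix (Fin n) (Fin n) ℝ := B * Sg₁ * Bᵀ + W with hM1d
  set M₂ : Matrix (Fin n) (Fin n) ℝ := B * Sg₂ * Bᵀ + W with hM2d
  set f₁ : ℕ → Matrix (Fin n) (Fin n) ℝ := fun t => γ ^ t •
    (L₁ ^ t * D₀ * (L₁ᵀ) ^ t + ∑ s ∈ Finset.Icc 1 t, L₁ ^ (t - s) * M₁ * (L₁ᵀ) ^ (t - s))
    with hf1d
  set f₂ : ℕ → Matrix (Fin n) (Fin n) ℝ := fun t => γ ^ t •
    (L₂ ^ t * D₀ * (L₂ᵀ) ^ t + ∑ s ∈ Finset.Icc 1 t, L₂ ^ (t - s) * M₂ * (L₂ᵀ) ^ (t - s))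
    with hf2d
  have hS1 : Smat γ A B W D₀ K₁ Sg₁ = ∑' t, f₁ t := rfl
  have hS2 : Smat γ A B W D₀ K₂ Sg₂ = ∑' t, f₂ t := rfl
  rw [hS1, hS2]
  -- basic norm facts
  have hBd : ‖L₁ - L₂‖ ≤ ‖B‖ * ‖K₁ - K₂‖ := by
    have hdiff : L₁ - L₂ = B * (K₂ - K₁) := by rw [hL1d, hL2d, Matrix.mul_sub]; abel
    rw [hdiff]
    refine (Matrix.l2_opNorm_mul _ _).trans (le_of_eq ?_)
    rw [norm_sub_rev]
  have hMd : M₁ - M₂ = B * (Sg₁ - Sg₂) * Bᵀ := by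
    rw [hM1d, hM2d, Matrix.mul_sub, Matrix.sub_mul]; abel
  have hNd : ‖B * (Sg₁ - Sg₂) * Bᵀ‖ ≤ ‖B‖ * ‖Sg₁ - Sg₂‖ * ‖B‖ := by
    refine (Matrix.l2_opNorm_mul _ _).trans ?_
    rw [normT]
    exact mul_le_mul_of_nonneg_right (Matrix.l2_opNorm_mul _ _) (norm_nonneg _)
  -- the auxiliary series h
  have habs : ‖ρ^2‖ < 1 := by rw [Real.norm_eq_abs, abs_of_nonneg hρ2]; exact hρ2lt
  have hsum1 : Summable (fun j : ℕ => (j:ℝ) * (ρ^2)^j) := by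
    simpa using summable_pow_mul_geometric_of_norm_lt_one (k := 1) habs
  have hsum2 : Summable (fun j : ℕ => ((ρ^2)^j : ℝ)) := summable_geometric_of_lt_one hρ2 hρ2lt
  set h : ℕ → ℝ := fun j => (2*‖M₁‖*‖L₁-L₂‖/ρ) * (j * (ρ^2)^j)
      + (‖B‖^2*‖Sg₁-Sg₂‖) * (ρ^2)^j with hhd
  have hhs : Summable h := (hsum1.mul_left _).add (hsum2.mul_left _)
  have hh0 : ∀ j, 0 ≤ h j := by intro j; simp only [hhd]; positivity
  have hC : ∑' j, h j = (2*‖M₁‖*‖L₁-L₂‖/ρ) * (ρ^2/(1-ρ^2)^2)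
      + (‖B‖^2*‖Sg₁-Sg₂‖) * (1-ρ^2)⁻¹ := by
    simp only [hhd]
    rw [Summable.tsum_add (hsum1.mul_left _) (hsum2.mul_left _), tsum_mul_left, tsum_mul_left,
      tsum_coe_mul_geometric_of_norm_lt_one habs, tsum_geometric_of_lt_one hρ2 hρ2lt]
  -- per-index bound for the noise terms
  have hterm : ∀ j : ℕ, ‖L₁ ^ j * M₁ * (L₁ᵀ) ^ j - L₂ ^ j * M₂ * (L₂ᵀ) ^ j‖ ≤ h j := by
    intro j
    have hdec : L₁ ^ j * M₁ * (L₁ᵀ) ^ j - L₂ ^ j * M₂ * (L₂ᵀ) ^ j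
        = (L₁ ^ j * M₁ * (L₁ ^ j)ᵀ - L₂ ^ j * M₁ * (L₂ ^ j)ᵀ)
          + L₂ ^ j * (B * (Sg₁ - Sg₂) * Bᵀ) * (L₂ ^ j)ᵀ := by
      rw [← hMd, ← Matrix.transpose_pow, ← Matrix.transpose_pow]; noncomm_ring
    rw [hdec]
    have e1 : ‖L₁ ^ j * M₁ * (L₁ ^ j)ᵀ - L₂ ^ j * M₁ * (L₂ ^ j)ᵀ‖
        ≤ (2*‖M₁‖*‖L₁-L₂‖/ρ) * (j * (ρ^2)^j) := by
      rw [show (2*‖M₁‖*‖L₁-L₂‖/ρ) * (↑j * (ρ^2)^j) = (2*j*ρ^(2*j)*‖M₁‖*‖L₁-L₂‖)/ρ by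
        rw [pow_mul]; field_simp]
      rw [le_div_iff₀ hρ0]
      exact mconj_sub_le hρ _ _ _ hK₁ hK₂ j
    have e2 : ‖L₂ ^ j * (B * (Sg₁ - Sg₂) * Bᵀ) * (L₂ ^ j)ᵀ‖
        ≤ (‖B‖^2*‖Sg₁-Sg₂‖) * (ρ^2)^j := by
      have q1 : ‖L₂ ^ j‖ ≤ ρ ^ j := mnorm_pow_le hρ _ hK₂ j
      have q2 : ‖(L₂ ^ j)ᵀ‖ ≤ ρ ^ j := by rw [normT]; exact q1
      calc ‖L₂ ^ j * (B * (Sg₁ - Sg₂) * Bᵀ) * (L₂ ^ j)ᵀ‖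
          ≤ ‖L₂ ^ j * (B * (Sg₁ - Sg₂) * Bᵀ)‖ * ‖(L₂ ^ j)ᵀ‖ := Matrix.l2_opNorm_mul _ _
        _ ≤ (ρ ^ j * (‖B‖ * ‖Sg₁ - Sg₂‖ * ‖B‖)) * ρ ^ j := by
            refine mul_le_mul ?_ q2 (norm_nonneg _) (by positivity)
            exact (Matrix.l2_opNorm_mul _ _).trans
              (mul_le_mul q1 hNd (norm_nonneg _) (by positivity))
        _ = (‖B‖^2*‖Sg₁-Sg₂‖) * (ρ^2)^j := by ring
    simp only [hhd]
    exact (norm_add_le _ _).trans (add_le_add e1 e2)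
  -- D₀ term bound
  have hDt : ∀ t : ℕ, ‖L₁ ^ t * D₀ * (L₁ᵀ) ^ t - L₂ ^ t * D₀ * (L₂ᵀ) ^ t‖
      ≤ (2*‖D₀‖*‖L₁-L₂‖/ρ) * (t * (ρ^2)^t) := by
    intro t
    rw [← Matrix.transpose_pow, ← Matrix.transpose_pow]
    rw [show (2*‖D₀‖*‖L₁-L₂‖/ρ) * (↑t * (ρ^2)^t) = (2*t*ρ^(2*t)*‖D₀‖*‖L₁-L₂‖)/ρ by
      rw [pow_mul]; field_simp]
    rw [le_div_iff₀ hρ0]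
    exact mconj_sub_le hρ _ _ _ hK₁ hK₂ t
  -- sum over s
  have hsum_s : ∀ t : ℕ,
      ∑ s ∈ Finset.Icc 1 t,
        ‖L₁ ^ (t-s) * M₁ * (L₁ᵀ) ^ (t-s) - L₂ ^ (t-s) * M₂ * (L₂ᵀ) ^ (t-s)‖
      ≤ ∑' j, h j := by
    intro t
    calc ∑ s ∈ Finset.Icc 1 t,
          ‖L₁ ^ (t-s) * M₁ * (L₁ᵀ) ^ (t-s) - L₂ ^ (t-s) * M₂ * (L₂ᵀ) ^ (t-s)‖
        ≤ ∑ s ∈ Finset.Icc 1 t, h (t - s) := Finset.sum_le_sum fun s _ => hterm (t - s)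
      _ = ∑ j ∈ (Finset.Icc 1 t).image (fun s => t - s), h j := by
          rw [Finset.sum_image]
          intro x hx y hy hxy
          simp only [Finset.coe_Icc, Set.mem_Icc, Finset.mem_Icc] at hx hy hxy
          omega
      _ ≤ ∑' j, h j := Summable.sum_le_tsum _ (fun j _ => hh0 j) hhs
  -- per-t bound
  have hft : ∀ t : ℕ, ‖f₁ t - f₂ t‖
      ≤ γ^t * ((2*‖D₀‖*‖L₁-L₂‖/ρ) * (t * (ρ^2)^t) + ∑' j, h j) := by
    intro t
    have hsplit : f₁ t - f₂ t = γ ^ t •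
        ((L₁ ^ t * D₀ * (L₁ᵀ) ^ t - L₂ ^ t * D₀ * (L₂ᵀ) ^ t)
          + ∑ s ∈ Finset.Icc 1 t,
            (L₁ ^ (t-s) * M₁ * (L₁ᵀ) ^ (t-s) - L₂ ^ (t-s) * M₂ * (L₂ᵀ) ^ (t-s))) := by
      simp only [hf1d, hf2d]
      rw [← smul_sub, Finset.sum_sub_distrib]
      congr 1
      abel
    rw [hsplit, norm_smul, Real.norm_eq_abs, abs_of_pos (by positivity : (0:ℝ) < γ^t)]
    refine mul_le_mul_of_nonneg_left ?_ (by positivity)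
    refine (norm_add_le _ _).trans (add_le_add (hDt t) ?_)
    exact (norm_sum_le _ _).trans (hsum_s t)
  -- summability facts
  have hgeo : Summable (fun t : ℕ => γ ^ t) := summable_geometric_of_lt_one hγ0.le hγ1
  have habsγ : ‖γ‖ < 1 := by rw [Real.norm_eq_abs, abs_of_pos hγ0]; exact hγ1
  have htgeo : Summable (fun t : ℕ => (t:ℝ) * γ ^ t) := by
    simpa using summable_pow_mul_geometric_of_norm_lt_one (k := 1) habsγ
  have habsγρ : ‖γ*ρ^2‖ < 1 := by rw [Real.norm_eq_abs, abs_of_nonneg hγρ0]; exact hγρlt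
  have hfb : ∀ (L M : Matrix (Fin n) (Fin n) ℝ), ‖L‖ ≤ ρ → ∀ t : ℕ,
      ‖γ ^ t • (L ^ t * D₀ * (Lᵀ) ^ t
        + ∑ s ∈ Finset.Icc 1 t, L ^ (t-s) * M * (Lᵀ) ^ (t-s))‖
      ≤ γ^t * (‖D₀‖ + t * ‖M‖) := by
    intro L M hL t
    have hconj : ∀ (X : Matrix (Fin n) (Fin n) ℝ) (j : ℕ), ‖L ^ j * X * (Lᵀ) ^ j‖ ≤ ‖X‖ := by
      intro X j
      rw [← Matrix.transpose_pow]
      have q1 : ‖L ^ j‖ ≤ ρ ^ j := mnorm_pow_le hρ _ hL j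
      have q2 : ‖(L ^ j)ᵀ‖ ≤ ρ ^ j := by rw [normT]; exact q1
      have hρj1 : ρ ^ j ≤ 1 := pow_le_one₀ hρ hρ1.le
      calc ‖L ^ j * X * (L ^ j)ᵀ‖
          ≤ ‖L ^ j * X‖ * ‖(L ^ j)ᵀ‖ := Matrix.l2_opNorm_mul _ _
        _ ≤ (ρ ^ j * ‖X‖) * ρ ^ j := mul_le_mul ((Matrix.l2_opNorm_mul _ _).trans
            (mul_le_mul_of_nonneg_right q1 (norm_nonneg _))) q2 (norm_nonneg _) (by positivity)
        _ ≤ ‖X‖ := by nlinarith [pow_nonneg hρ j, norm_nonneg X,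
            mul_nonneg (pow_nonneg hρ j) (norm_nonneg X)]
    rw [norm_smul, Real.norm_eq_abs, abs_of_pos (by positivity : (0:ℝ) < γ^t)]
    refine mul_le_mul_of_nonneg_left ?_ (by positivity)
    refine (norm_add_le _ _).trans (add_le_add (hconj D₀ t) ?_)
    refine (norm_sum_le _ _).trans ?_
    calc ∑ s ∈ Finset.Icc 1 t, ‖L ^ (t-s) * M * (Lᵀ) ^ (t-s)‖
        ≤ ∑ _s ∈ Finset.Icc 1 t, ‖M‖ := Finset.sum_le_sum fun s _ => hconj M (t - s)
      _ = t * ‖M‖ := by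
          rw [Finset.sum_const, Nat.card_Icc]
          simp [nsmul_eq_mul]
  have hbnd : ∀ m : ℝ, Summable (fun t : ℕ => γ^t * (‖D₀‖ + t * m)) := by
    intro m
    refine ((hgeo.mul_left ‖D₀‖).add (htgeo.mul_left m)).congr fun t => by ring
  have hf1s : Summable f₁ := by
    refine Summable.of_norm_bounded (hbnd ‖M₁‖) fun t => ?_
    simp only [hf1d]
    exact hfb L₁ M₁ hK₁ t
  have hf2s : Summable f₂ := by
    refine Summable.of_norm_bounded (hbnd ‖M₂‖) fun t => ?_
    simp only [hf2d]
    exact hfb L₂ M₂ hK₂ t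
  have h1 : Summable (fun t : ℕ => (2*‖D₀‖*‖L₁-L₂‖/ρ) * ((t:ℝ) * (γ*ρ^2)^t)) := by
    refine Summable.mul_left _ ?_
    simpa using summable_pow_mul_geometric_of_norm_lt_one (k := 1) habsγρ
  have h2 : Summable (fun t : ℕ => (∑' j, h j) * γ^t) := hgeo.mul_left _
  have hgsum : Summable (fun t : ℕ =>
      γ^t * ((2*‖D₀‖*‖L₁-L₂‖/ρ) * (t * (ρ^2)^t) + ∑' j, h j)) := by
    refine (h1.add h2).congr fun t => ?_
    rw [mul_pow]; ring
  have hfns : Summable (fun t => ‖f₁ t - f₂ t‖) :=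
    Summable.of_nonneg_of_le (fun t => norm_nonneg _) hft hgsum
  -- main chain
  calc ‖(∑' t, f₁ t) - ∑' t, f₂ t‖
      = ‖∑' t, (f₁ t - f₂ t)‖ := by rw [Summable.tsum_sub hf1s hf2s]
    _ ≤ ∑' t, ‖f₁ t - f₂ t‖ := norm_tsum_le_tsum_norm hfns
    _ ≤ ∑' t : ℕ, γ^t * ((2*‖D₀‖*‖L₁-L₂‖/ρ) * (t * (ρ^2)^t) + ∑' j, h j) :=
        Summable.tsum_le_tsum hft hfns hgsum
    _ = (2*‖D₀‖*‖L₁-L₂‖/ρ) * (γ*ρ^2/(1-γ*ρ^2)^2) + (∑' j, h j) * (1-γ)⁻¹ := by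
        have e : ∀ t : ℕ, γ^t * ((2*‖D₀‖*‖L₁-L₂‖/ρ) * (t * (ρ^2)^t) + ∑' j, h j)
            = (2*‖D₀‖*‖L₁-L₂‖/ρ) * ((t:ℝ) * (γ*ρ^2)^t) + (∑' j, h j) * γ^t := fun t => by
          rw [mul_pow]; ring
        rw [tsum_congr e, Summable.tsum_add h1 h2, tsum_mul_left, tsum_mul_left,
          tsum_coe_mul_geometric_of_norm_lt_one habsγρ,
          tsum_geometric_of_lt_one hγ0.le hγ1]
    _ = ‖D₀‖*‖L₁-L₂‖*(2*γ*ρ/(1-γ*ρ^2)^2)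
        + ‖M₁‖*‖L₁-L₂‖*(2*ρ/((1-ρ^2)^2*(1-γ)))
        + ‖B‖^2*‖Sg₁-Sg₂‖*(1/((1-ρ^2)*(1-γ))) := by
        rw [hC]; exact arith_split ‖D₀‖ ‖M₁‖ _ _ ρ γ hρne hpne hgne hcne
    _ ≤ ‖D₀‖*(‖B‖*‖K₁-K₂‖)*((1-γ*ρ^2+γ)/(1-γ*ρ^2)^2*(2*ρ))
        + ‖M₁‖*(‖B‖*‖K₁-K₂‖)*(((2-ρ^2)/((1-ρ^2)^2*(1-γ))
            + 1/((1-ρ^2)^2*(1-γ*ρ^2)))*(2*ρ))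
        + (1/((1-ρ^2)*(1-γ)) + 1/((1-ρ^2)*(1-γ*ρ^2)))*(‖B‖^2*‖Sg₁-Sg₂‖) := by
        refine add_le_add (add_le_add ?_ ?_) ?_
        · have hcoef : 2*γ*ρ/(1-γ*ρ^2)^2 ≤ (1-γ*ρ^2+γ)/(1-γ*ρ^2)^2*(2*ρ) := by
            have heq : (1-γ*ρ^2+γ)/(1-γ*ρ^2)^2*(2*ρ) - 2*γ*ρ/(1-γ*ρ^2)^2
                = 2*ρ/(1-γ*ρ^2) := by field_simp; ring
            have h0 : (0:ℝ) ≤ 2*ρ/(1-γ*ρ^2) := div_nonneg (by positivity) hc.le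
            linarith
          exact mul_le_mul (mul_le_mul_of_nonneg_left hBd (norm_nonneg _)) hcoef
            (div_nonneg (by positivity) (sq_nonneg _)) (by positivity)
        · have hcoef : 2*ρ/((1-ρ^2)^2*(1-γ))
              ≤ ((2-ρ^2)/((1-ρ^2)^2*(1-γ)) + 1/((1-ρ^2)^2*(1-γ*ρ^2)))*(2*ρ) := by
            have heq : ((2-ρ^2)/((1-ρ^2)^2*(1-γ)) + 1/((1-ρ^2)^2*(1-γ*ρ^2)))*(2*ρ)
                - 2*ρ/((1-ρ^2)^2*(1-γ))
                = 2*ρ*(1-ρ^2)/((1-ρ^2)^2*(1-γ)) + 2*ρ/((1-ρ^2)^2*(1-γ*ρ^2)) := by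
              field_simp; ring
            have h0a : (0:ℝ) ≤ 2*ρ*(1-ρ^2)/((1-ρ^2)^2*(1-γ)) :=
              div_nonneg (mul_nonneg (by positivity) hp.le) (mul_nonneg (sq_nonneg _) hg.le)
            have h0b : (0:ℝ) ≤ 2*ρ/((1-ρ^2)^2*(1-γ*ρ^2)) :=
              div_nonneg (by positivity) (mul_nonneg (sq_nonneg _) hc.le)
            linarith
          exact mul_le_mul (mul_le_mul_of_nonneg_left hBd (norm_nonneg _)) hcoef
            (div_nonneg (by positivity) (mul_nonneg (sq_nonneg _) hg.le)) (by positivity)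
        · have h0 : (0:ℝ) ≤ 1/((1-ρ^2)*(1-γ*ρ^2)) :=
            div_nonneg zero_le_one (mul_nonneg hp.le hc.le)
          calc ‖B‖^2*‖Sg₁-Sg₂‖*(1/((1-ρ^2)*(1-γ)))
              ≤ ‖B‖^2*‖Sg₁-Sg₂‖*(1/((1-ρ^2)*(1-γ)) + 1/((1-ρ^2)*(1-γ*ρ^2))) :=
                mul_le_mul_of_nonneg_left (le_add_of_nonneg_right h0) (by positivity)
            _ = (1/((1-ρ^2)*(1-γ)) + 1/((1-ρ^2)*(1-γ*ρ^2)))*(‖B‖^2*‖Sg₁-Sg₂‖) := by ring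
    _ = ((1 - γ * ρ ^ 2 + γ) / (1 - γ * ρ ^ 2) ^ 2 * ‖D₀‖ +
          ((2 - ρ ^ 2) / ((1 - ρ ^ 2) ^ 2 * (1 - γ)) +
            1 / ((1 - ρ ^ 2) ^ 2 * (1 - γ * ρ ^ 2))) * ‖M₁‖) *
        (2 * ρ * ‖B‖) * ‖K₁ - K₂‖ +
      (1 / ((1 - ρ ^ 2) * (1 - γ)) + 1 / ((1 - ρ ^ 2) * (1 - γ * ρ ^ 2))) *
        ‖B‖ ^ 2 * ‖Sg₁ - Sg₂‖ := by ring
end
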